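/- Assume SC: every pointwise continuous function F : ℕ^ℕ → ℕ is strongly continuous. Then sc-FAN holds: for every c-bar P ⊆ ℕ* and every fan T, there exists M ∈ ℕ such that P(ᾱM) for every path α in T. -/
import Mathlib


/-- Initial segment of `α` of length `n`. -/
def seg (α : ℕ → ℕ) (n : ℕ) : List ℕ := List.ofFn (fun i : Fin n => α i)

/-- `a` followed by the constant zero sequence. -/
def zext (a : List ℕ) : ℕ → ℕ := fun i => a.getD i 0

/-- Upward closure under extension. -/
def extU (U : Set (List ℕ)) : Set (List ℕ) := {a | ∃ b ∈ U, b <+: a}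

/-- The cover of formal Baire space, generated by η, ζ, ϝ. -/
inductive Cover : List ℕ → Set (List ℕ) → Prop
  | eta {a : List ℕ} {U : Set (List ℕ)} : a ∈ U → Cover a U
  | zeta {a : List ℕ} {U : Set (List ℕ)} (k : ℕ) : Cover a U → Cover (a ++ [k]) U
  | digamma {a : List ℕ} {U : Set (List ℕ)} : (∀ n, Cover (a ++ [n]) U) → Cover a U

/-- A spread: a decidable tree where every node has a child. -/
def IsSpread (T : Set (List ℕ)) : Prop :=
  (∀ a, a ∈ T ∨ a ∉ T) ∧ (∀ a b : List ℕ, a <+: b → b ∈ T → a ∈ T) ∧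
  (∀ a ∈ T, ∃ n, a ++ [n] ∈ T)

/-- A fan: a finitely branching spread. -/
def IsFan (T : Set (List ℕ)) : Prop :=
  IsSpread T ∧ ∀ a ∈ T, ∃ N, ∀ n, a ++ [n] ∈ T → n ≤ N

/-- `α` is a path in the tree `T`. -/
def IsPath (T : Set (List ℕ)) (α : ℕ → ℕ) : Prop := ∀ n, seg α n ∈ T

/-- A c-bar: a c-set barring every sequence. -/
def IsCBar (P : Set (List ℕ)) : Prop :=
  (∃ δ : List ℕ → ℕ, ∀ a, a ∈ P ↔ ∀ b, δ a = δ (a ++ b)) ∧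
  (∀ α : ℕ → ℕ, ∃ n, seg α n ∈ P)

/-- Pointwise continuity for `F : ℕ^ℕ → ℕ`. -/
def PtwiseCts (F : (ℕ → ℕ) → ℕ) : Prop :=
  ∀ α : ℕ → ℕ, ∃ n, ∀ β : ℕ → ℕ, seg β n = seg α n → F β = F α

/-- An inductive subset of ℕ*. -/
def Inductive (Q : Set (List ℕ)) : Prop := ∀ a, (∀ n, a ++ [n] ∈ Q) → a ∈ Q

/-- Preimage of a subset of ℕ under a relation r ⊆ ℕ* × ℕ. -/
def rInv (r : List ℕ → ℕ → Prop) (D : Set ℕ) : Set (List ℕ) := {a | ∃ n ∈ D, r a n}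

/-- Formal topology map from formal Baire space to formal natural numbers. -/
def IsFTopMap (r : List ℕ → ℕ → Prop) : Prop :=
  Cover [] (rInv r Set.univ) ∧
  ∀ n m : ℕ, ∀ a ∈ extU (rInv r {n}) ∩ extU (rInv r {m}),
    Cover a (rInv r {l | l = n ∧ n = m})

/-- `F` is formally continuous: induced by a formal topology map on points. -/
def FormallyCts (F : (ℕ → ℕ) → ℕ) : Prop :=
  ∃ r : List ℕ → ℕ → Prop, IsFTopMap r ∧
    ∀ α : ℕ → ℕ, {n | ∃ k, r (seg α k) n} = {F α}

/-- The class of Brouwer-operations. -/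
inductive IsBrouwerOp : (List ℕ → ℕ) → Prop
  | const (n : ℕ) : IsBrouwerOp (fun _ => n + 1)
  | sup {γ : List ℕ → ℕ} : γ [] = 0 →
      (∀ n, IsBrouwerOp (fun a => γ (n :: a))) → IsBrouwerOp γ

/-- `bar γ`: minimal sequences on which `γ` is positive. -/
def barOf (γ : List ℕ → ℕ) : Set (List ℕ) :=
  {a | 0 < γ a ∧ ∀ b : List ℕ, b <+: a → b ≠ a → γ b = 0}

/-- The set presentation `Cov` of formal Baire space. -/
inductive Cov : List ℕ → Set (List ℕ) → Prop
  | single (a : List ℕ) : Cov a {a}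
  | union {a : List ℕ} {U : ℕ → Set (List ℕ)} :
      (∀ n, Cov (a ++ [n]) (U n)) → Cov a (⋃ n, U n)

lemma seg_length (α : ℕ → ℕ) (n : ℕ) : (seg α n).length = n := by simp [seg]

lemma seg_take (α : ℕ → ℕ) {m n : ℕ} (h : m ≤ n) : (seg α n).take m = seg α m := by
  apply List.ext_getElem
  · simp [seg, h]
  · intro i h1 h2
    simp [seg]

lemma seg_prefix (α : ℕ → ℕ) {m n : ℕ} (h : m ≤ n) : seg α m <+: seg α n := by
  rw [← seg_take α h]; exact List.take_prefix _ _

lemma seg_zext (a : List ℕ) {n : ℕ} (h : n ≤ a.length) : seg (zext a) n = a.take n := by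
  apply List.ext_getElem
  · simp [seg, h]
  · intro i h1 h2
    have hi : i < a.length := lt_of_lt_of_le (by simpa [seg] using h1) h
    simp [seg, zext, List.getD_eq_getElem?_getD, List.getElem?_eq_getElem hi]

lemma seg_zext_self (a : List ℕ) : seg (zext a) a.length = a := by
  rw [seg_zext a le_rfl, List.take_length]

lemma exists_change (f : ℕ → ℕ) (K : ℕ) :
    ∀ j, f K ≠ f (K + j) → ∃ k, K ≤ k ∧ k < K + j ∧ f k ≠ f (k + 1) := by
  intro j
  induction j with
  | zero => simp
  | succ j ih =>
    intro h
    by_cases h2 : f (K + j) = f (K + (j + 1))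
    · obtain ⟨k, h1, h3, h4⟩ := ih (fun he => h (he.trans h2))
      exact ⟨k, h1, by omega, h4⟩
    · exact ⟨K + j, by omega, by omega, by rwa [show K + j + 1 = K + (j+1) by omega]⟩

theorem SC_implies_scFAN
    (hSC : ∀ F : (ℕ → ℕ) → ℕ, PtwiseCts F →
      ∀ T : Set (List ℕ), IsFan T → ∃ N, ∀ α : ℕ → ℕ, IsPath T α →
        ∀ β : ℕ → ℕ, seg α N = seg β N → F α = F β) :
    ∀ P : Set (List ℕ), IsCBar P → ∀ T : Set (List ℕ), IsFan T →
      ∃ M, ∀ α : ℕ → ℕ, IsPath T α → seg α M ∈ P := by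
  intro P hP T hT
  obtain ⟨⟨δ, hδ⟩, hbar⟩ := hP
  -- P is upward closed
  have hup : ∀ a c, a ∈ P → a ++ c ∈ P := by
    intro a c ha
    rw [hδ] at ha ⊢
    intro b
    rw [List.append_assoc, ← ha c, ← ha (c ++ b)]
  set Ch : (ℕ → ℕ) → Set ℕ := fun α => {n | δ (seg α n) ≠ δ (seg α (n + 1))} with hCh
  have hstab : ∀ (α : ℕ → ℕ) (n k : ℕ), seg α n ∈ P → n ≤ k →
      δ (seg α k) = δ (seg α n) := by
    intro α n k hn hk
    obtain ⟨t, ht⟩ := seg_prefix α hk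
    rw [← ht, ← (hδ _).1 hn t]
  have hbdd : ∀ α, BddAbove (Ch α) := by
    intro α
    obtain ⟨n, hn⟩ := hbar α
    refine ⟨n, fun k hk => ?_⟩
    by_contra hc
    push_neg at hc
    exact hk ((hstab α n k hn (le_of_lt hc)).trans
      (hstab α n (k + 1) hn (by omega)).symm)
  set F : (ℕ → ℕ) → ℕ := fun α => sSup (Ch α) with hF
  have hFub : ∀ (α : ℕ → ℕ) (k : ℕ), k ∈ Ch α → k ≤ F α := fun α k hk =>
    le_csSup (hbdd α) hk
  -- Ch is determined by a segment in P
  have hChEq : ∀ (α β : ℕ → ℕ) (n : ℕ), seg α n ∈ P → seg β n = seg α n →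
      Ch β = Ch α := by
    intro α β n hn hseg
    have hbn : seg β n ∈ P := by rw [hseg]; exact hn
    ext k
    rcases lt_or_ge k n with hk | hk
    · have h1 : seg β k = seg α k := by
        rw [← seg_take β (le_of_lt hk), ← seg_take α (le_of_lt hk), hseg]
      have h2 : seg β (k + 1) = seg α (k + 1) := by
        rw [← seg_take β (by omega : k + 1 ≤ n), ← seg_take α (by omega : k + 1 ≤ n), hseg]
      simp [hCh, h1, h2]
    · have e1 := hstab β n k hbn hk
      have e2 := hstab β n (k + 1) hbn (by omega)
      have e3 := hstab α n k hn hk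
      have e4 := hstab α n (k + 1) hn (by omega)
      simp only [hCh, Set.mem_setOf_eq, e1, e2, e3, e4]
      simp
  have hpc : PtwiseCts F := by
    intro α
    obtain ⟨n, hn⟩ := hbar α
    exact ⟨n, fun β hseg => by simp only [hF, hChEq α β n hn hseg]⟩
  obtain ⟨N, hN⟩ := hSC F hpc T hT
  -- finiteness of level N of the fan
  have hNa : ∀ a : List ℕ, ∃ Na, ∀ k, a ++ [k] ∈ T → k ≤ Na := by
    intro a
    by_cases h : a ∈ T
    · exact hT.2 a h
    · exact ⟨0, fun k hk => absurd (hT.1.2.1 a (a ++ [k]) ⟨[k], rfl⟩ hk) h⟩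
  choose Na hNa using hNa
  have hlev : ∀ n, {a | a ∈ T ∧ a.length = n}.Finite := by
    intro n
    induction n with
    | zero =>
      apply Set.Finite.subset (Set.finite_singleton ([] : List ℕ))
      intro a ⟨_, ha⟩
      simpa using List.length_eq_zero_iff.mp ha
    | succ n ih =>
      apply Set.Finite.subset
        (Set.Finite.biUnion ih (fun a _ => (Set.finite_Iic (Na a)).image (fun k => a ++ [k])))
      rintro b ⟨hbT, hbl⟩
      have hne : b ≠ [] := by intro h; simp [h] at hbl
      have hbe : b.dropLast ++ [b.getLast hne] = b := List.dropLast_append_getLast hne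
      have hdT : b.dropLast ∈ T := hT.1.2.1 _ b ⟨[b.getLast hne], hbe⟩ hbT
      refine Set.mem_biUnion (show b.dropLast ∈ {a | a ∈ T ∧ a.length = n} from
        ⟨hdT, by simp [hbl]⟩) ?_
      exact ⟨b.getLast hne, hNa b.dropLast _ (by rw [hbe]; exact hbT), hbe⟩
  -- bound for F on paths
  obtain ⟨B, hB⟩ := ((hlev N).image (fun a => F (zext a))).bddAbove
  have hFB : ∀ α, IsPath T α → F α ≤ B := by
    intro α hα
    have hseg : seg α N = seg (zext (seg α N)) N := by
      have := seg_zext_self (seg α N)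
      rw [seg_length] at this
      exact this.symm
    rw [hN α hα (zext (seg α N)) hseg]
    exact hB ⟨seg α N, ⟨hα N, seg_length α N⟩, rfl⟩
  -- main claim
  have main : ∀ α, IsPath T α → ∀ K, N ≤ K → F α < K → seg α K ∈ P := by
    intro α hα K hNK hFK
    by_contra hnP
    have hc : ∃ c, δ (seg α K ++ c) ≠ δ (seg α K) := by
      by_contra h
      push_neg at h
      exact hnP ((hδ _).2 fun b => (h b).symm)
    obtain ⟨c, hc⟩ := hc
    set β := zext (seg α K ++ c) with hβ
    have hlen : (seg α K ++ c).length = K + c.length := by simp [seg_length]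
    have hβK : seg β K = seg α K := by
      rw [hβ, seg_zext _ (by omega)]
      have := List.take_left (l₁ := seg α K) (l₂ := c)
      rwa [seg_length] at this
    have hβKc : seg β (K + c.length) = seg α K ++ c := by
      have := seg_zext_self (seg α K ++ c)
      rwa [hlen] at this
    obtain ⟨k, hk1, _, hk3⟩ := exists_change (fun k => δ (seg β k)) K c.length
      (by simp only [hβK, hβKc]; exact hc.symm)
    have hFαβ : F α = F β := hN α hα β (by
      rw [← seg_take α hNK, ← seg_take β hNK, hβK])
    have := hFub β k hk3
    omega
  refine ⟨max N (B + 1), fun α hα => ?_⟩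
  have h1 : seg α (max N (F α + 1)) ∈ P :=
    main α hα _ (le_max_left _ _) (lt_of_lt_of_le (by omega) (le_max_right _ _))
  have h2 : max N (F α + 1) ≤ max N (B + 1) :=
    max_le_max le_rfl (by have := hFB α hα; omega)
  obtain ⟨t, ht⟩ := seg_prefix α h2
  rw [← ht]
  exact hup _ t h1
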